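/- arXiv:2101.02916 — 4 statements merged into one kernel-verified Lean document; each statement's English description precedes it below -/
import Mathlib

section
/- Let f be a Fréchet-differentiable function of weights W = (w^(1), …, w^(m)) and parameters g that is positively scale-invariant in W. Then for every W with nonzero blocks, every g, every index i, and every real step size η: ‖w^(i) + η · ∇_{w^(i)} f(W, g)‖² = ‖w^(i)‖² + η² · ‖∇_{w^(i)} f(W, g)‖². -/
open MeasureTheory RealInnerProductSpace
open scoped BigOperators

noncomputable section

/-- The space of weight tuples `W = (w⁽¹⁾, …, w⁽ᵐ⁾)` with `w⁽ⁱ⁾ ∈ ℝ^{dᵢ}`. -/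
abbrev Wsp (m : ℕ) (d : Fin m → ℕ) : Type :=
  PiLp 2 fun i : Fin m => EuclideanSpace ℝ (Fin (d i))

/-- The space of extra parameters `g ∈ ℝᵖ`. -/
abbrev Gsp (p : ℕ) : Type := EuclideanSpace ℝ (Fin p)

/-- Blockwise positive rescaling `T_a(W) = (a₁ w⁽¹⁾, …, a_m w⁽ᵐ⁾)`. -/
def rescale {m : ℕ} {d : Fin m → ℕ} (a : Fin m → ℝ) (W : Wsp m d) : Wsp m d :=
  WithLp.toLp 2 fun i => a i • W i

/-- `f` is positively scale-invariant in the weights. -/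
def PSI {m p : ℕ} {d : Fin m → ℕ} (f : Wsp m d → Gsp p → ℝ) : Prop :=
  ∀ a : Fin m → ℝ, (∀ i, 0 < a i) → ∀ W g, f (rescale a W) g = f W g

/-- Partial (Fréchet) gradient of `f` in the `i`-th weight block. -/
def gradW {m p : ℕ} {d : Fin m → ℕ} (f : Wsp m d → Gsp p → ℝ)
    (W : Wsp m d) (g : Gsp p) (i : Fin m) : EuclideanSpace ℝ (Fin (d i)) :=
  gradient (fun v => f (WithLp.toLp 2 (Function.update W i v)) g) (W i)


/-- For a Fréchet-differentiable, positively scale-invariant `f`,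
weights with nonzero blocks and any real step size `η`,
`‖w⁽ⁱ⁾ + η ∇_{w⁽ⁱ⁾} f(W,g)‖² = ‖w⁽ⁱ⁾‖² + η² ‖∇_{w⁽ⁱ⁾} f(W,g)‖²`. -/
theorem stmt3 {m p : ℕ} {d : Fin m → ℕ} (f : Wsp m d → Gsp p → ℝ)
    (hdiff : Differentiable ℝ fun q : Wsp m d × Gsp p => f q.1 q.2)
    (hPSI : PSI f)
    (W : Wsp m d) (hW : ∀ j, W j ≠ 0) (g : Gsp p) (i : Fin m) (η : ℝ) :
    ‖W i + η • gradW f W g i‖ ^ 2 = ‖W i‖ ^ 2 + η ^ 2 * ‖gradW f W g i‖ ^ 2 := by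
  set u := gradW f W g i with hu
  set h : EuclideanSpace ℝ (Fin (d i)) → ℝ := fun v => f (WithLp.toLp 2 (Function.update W i v)) g with hh
  -- differentiability of the update map into Wsp
  have hupd : Differentiable ℝ
      (fun v : EuclideanSpace ℝ (Fin (d i)) =>
        (PiLp.continuousLinearEquiv 2 ℝ (fun j : Fin m => EuclideanSpace ℝ (Fin (d j)))).symm
          (Function.update (fun j => W j) i v)) :=
    fun v =>
      ((PiLp.continuousLinearEquiv 2 ℝ
        (fun j : Fin m => EuclideanSpace ℝ (Fin (d j)))).symm.differentiable.differentiableAt).comp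
        v (hasFDerivAt_update (fun j => W j) v).differentiableAt
  have hd : Differentiable ℝ h :=
    by have := hdiff.comp (Differentiable.prodMk hupd (differentiable_const g)); exact this
  have hg : HasGradientAt h u (W i) := by
    rw [hu, gradW]
    exact (hd (W i)).hasGradientAt
  have hF : HasFDerivAt h (InnerProductSpace.toDual ℝ _ u) (W i) :=
    hasGradientAt_iff_hasFDerivAt.mp hg
  -- the curve t ↦ h (t • W i)
  set c : ℝ → ℝ := fun t => h (t • W i) with hc
  have hsm : HasDerivAt (fun t : ℝ => t • W i) (W i) 1 := by
    simpa using (hasDerivAt_id (1 : ℝ)).smul_const (W i)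
  have hF' : HasFDerivAt h (InnerProductSpace.toDual ℝ _ u) ((1 : ℝ) • W i) := by
    rwa [one_smul]
  have hcd : HasDerivAt c (⟪u, W i⟫) 1 := by
    have := hF'.comp_hasDerivAt (1 : ℝ) hsm
    simp [InnerProductSpace.toDual_apply_apply] at this; exact this
  -- c is locally constant near 1 by PSI
  have hev : c =ᶠ[nhds (1 : ℝ)] fun _ => f W g := by
    filter_upwards [Ioi_mem_nhds (by norm_num : (0 : ℝ) < 1)] with t ht
    have hup : (WithLp.toLp 2 (Function.update W i (t • W i)) : Wsp m d)
        = rescale (Function.update (fun _ => (1 : ℝ)) i t) W := by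
      unfold rescale; congr 1; funext j
      by_cases hj : j = i
      · subst hj; simp [rescale, Function.update]
      · simp [rescale, Function.update, hj]
    have hpos : ∀ j, 0 < Function.update (fun _ => (1 : ℝ)) i t j := by
      intro j
      by_cases hj : j = i
      · subst hj; simpa [Function.update] using ht
      · simp [Function.update, hj]
    show h (t • W i) = f W g
    rw [hh]
    simp only []
    rw [hup, hPSI _ hpos W g]
  have hderiv0 : deriv c 1 = 0 := by
    rw [hev.deriv_eq]; simp
  have horth : ⟪u, W i⟫ = 0 := by
    rw [← hcd.deriv, hderiv0]
  have horth' : ⟪W i, u⟫ = 0 := by rw [real_inner_comm]; exact horth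
  rw [@norm_add_sq_real]
  rw [real_inner_smul_right, horth', mul_zero]
  rw [norm_smul, mul_pow, Real.norm_eq_abs, sq_abs]
  ring

end
end

section
/- Let (f_t)_{t≥0} be a sequence of Fréchet-differentiable functions of weights W = (w^(1), …, w^(m)) and parameters g, each positively scale-invariant in W. Fix an index i, and let sequences (W_t, g_t) satisfy the gradient-type update w_{t+1}^(i) = w_t^(i) − c_t · ∇_{w^(i)} f_t(W_t, g_t) for arbitrary real coefficients c_t (with all blocks of every W_t nonzero, and g_{t+1} arbitrary). Then the sequence of block norms ‖w_t^(i)‖ is nondecreasing in t. -/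
open MeasureTheory RealInnerProductSpace
open scoped BigOperators

noncomputable section

-- auxiliary: the update map is differentiable on Wsp
def updMap {m : ℕ} {d : Fin m → ℕ} (W : Wsp m d) (i : Fin m) :
    EuclideanSpace ℝ (Fin (d i)) → Wsp m d := fun v => WithLp.toLp 2 (Function.update W i v)

def inclMap {m : ℕ} (d : Fin m → ℕ) (i : Fin m) :
    EuclideanSpace ℝ (Fin (d i)) →L[ℝ] Wsp m d :=
  ((PiLp.continuousLinearEquiv 2 ℝ
      (fun j : Fin m => EuclideanSpace ℝ (Fin (d j)))).symm.toContinuousLinearMap).comp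
    (ContinuousLinearMap.pi
      (Pi.single (M := fun j => EuclideanSpace ℝ (Fin (d i)) →L[ℝ] EuclideanSpace ℝ (Fin (d j)))
        i (ContinuousLinearMap.id ℝ _)))

lemma updMap_eq {m : ℕ} {d : Fin m → ℕ} (W : Wsp m d) (i : Fin m) :
    updMap W i = fun v => W + inclMap d i (v - W i) := by
  funext v
  ext j
  rcases eq_or_ne j i with rfl | hj
  · simp [updMap, inclMap, PiLp.add_apply]
  · simp [updMap, inclMap, PiLp.add_apply, Function.update_of_ne hj, Pi.single_apply, hj]

lemma update_differentiable {m : ℕ} {d : Fin m → ℕ} (W : Wsp m d) (i : Fin m) :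
    Differentiable ℝ (updMap W i) := by
  rw [updMap_eq]
  exact (differentiable_const W).add
    ((inclMap d i).differentiable.comp (differentiable_id.sub_const (W i)))

theorem key_orth {m p : ℕ} {d : Fin m → ℕ} (f : Wsp m d → Gsp p → ℝ)
    (hdiff : Differentiable ℝ fun q : Wsp m d × Gsp p => f q.1 q.2)
    (hPSI : PSI f) (W : Wsp m d) (g : Gsp p) (i : Fin m) :
    ⟪W i, gradW f W g i⟫ = 0 := by
  set F : EuclideanSpace ℝ (Fin (d i)) → ℝ := fun v => f (WithLp.toLp 2 (Function.update W i v)) g with hF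
  have hFd : Differentiable ℝ F :=
    by have h := hdiff.comp ((update_differentiable W i).prodMk (differentiable_const g)); exact h
  -- derivative of s ↦ F (s • W i) at 1
  have h1 : HasDerivAt (fun s : ℝ => F (s • W i)) (fderiv ℝ F (W i) (W i)) 1 := by
    have hs : HasDerivAt (fun s : ℝ => s • W i) ((1:ℝ) • W i) 1 :=
      (hasDerivAt_id (1:ℝ)).smul_const (W i)
    have := ((hFd (W i)).hasFDerivAt.restrictScalars ℝ)
    exact ((hFd ((1:ℝ) • W i)).hasFDerivAt.comp_hasDerivAt (1:ℝ) (by simpa using hs)).congr_deriv (by rw [one_smul] : (fderiv ℝ F ((1:ℝ) • W i)) (W i) = fderiv ℝ F (W i) (W i))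
  -- the function is locally constant near 1
  have heq : (fun s : ℝ => F (s • W i)) =ᶠ[nhds 1] fun _ => F (W i) := by
    filter_upwards [Ioi_mem_nhds (show (0:ℝ) < 1 by norm_num)] with s hs
    have : WithLp.toLp 2 (Function.update W i (s • W i)) = rescale (Function.update (fun _ => 1) i s) W := by
      ext j
      by_cases hj : j = i
      · subst hj; simp [rescale]
      · simp [rescale, Function.update_of_ne hj]
    have hpos : ∀ j, 0 < Function.update (fun _ => (1:ℝ)) i s j := by
      intro j
      by_cases hj : j = i
      · subst hj; simpa using hs
      · simp [Function.update_of_ne hj]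
    calc F (s • W i) = f (rescale (Function.update (fun _ => 1) i s) W) g := by show f (WithLp.toLp 2 (Function.update W i (s • W i))) g = _; rw [this]
      _ = f W g := hPSI _ hpos W g
      _ = F (W i) := by simp [hF]
  have h2 : HasDerivAt (fun s : ℝ => F (s • W i)) 0 1 :=
    (hasDerivAt_const (1:ℝ) (F (W i))).congr_of_eventuallyEq heq
  have h0 : fderiv ℝ F (W i) (W i) = 0 := h1.unique h2
  have hg : HasGradientAt F (gradW f W g i) (W i) := (hFd (W i)).hasGradientAt
  have := hg.hasFDerivAt.fderiv
  rw [this] at h0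
  simpa [InnerProductSpace.toDual_apply_apply, real_inner_comm, mul_comm] using h0

/-- For a sequence of Fréchet-differentiable, positively scale-invariant
functions `f_t` and iterates following a gradient-type update in block `i` with
arbitrary real coefficients, the block norms `‖w_t⁽ⁱ⁾‖` are nondecreasing in `t`. -/
theorem stmt4 {m p : ℕ} {d : Fin m → ℕ} (f : ℕ → Wsp m d → Gsp p → ℝ)
    (hdiff : ∀ t, Differentiable ℝ fun q : Wsp m d × Gsp p => f t q.1 q.2)
    (hPSI : ∀ t, PSI (f t))
    (i : Fin m) (W : ℕ → Wsp m d) (g : ℕ → Gsp p) (c : ℕ → ℝ)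
    (hnz : ∀ t j, W t j ≠ 0)
    (hupd : ∀ t, W (t + 1) i = W t i - c t • gradW (f t) (W t) (g t) i) :
    Monotone fun t => ‖W t i‖ := by
  apply monotone_nat_of_le_succ
  intro t
  have horth : ⟪W t i, gradW (f t) (W t) (g t) i⟫ = 0 :=
    key_orth (f t) (hdiff t) (hPSI t) (W t) (g t) i
  have hsq : ‖W (t+1) i‖^2 = ‖W t i‖^2 + (c t)^2 * ‖gradW (f t) (W t) (g t) i‖^2 := by
    rw [hupd t]
    rw [norm_sub_sq_real, inner_smul_right, horth]
    simp [norm_smul, mul_pow]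
  have h1 : ‖W t i‖^2 ≤ ‖W (t+1) i‖^2 := by
    rw [hsq]
    have : (0:ℝ) ≤ (c t)^2 * ‖gradW (f t) (W t) (g t) i‖^2 := by positivity
    linarith
  calc ‖W t i‖ = Real.sqrt (‖W t i‖^2) := (Real.sqrt_sq (norm_nonneg _)).symm
    _ ≤ Real.sqrt (‖W (t+1) i‖^2) := Real.sqrt_le_sqrt h1
    _ = ‖W (t+1) i‖ := Real.sqrt_sq (norm_nonneg _)
end
end

section
/- Let (f_t)_{t≥0} be Fréchet-differentiable functions of weights W = (w^(1), …, w^(m)) and parameters g, each positively scale-invariant in W. Fix learning rates η_t^(i) > 0, η_t^g > 0 and consider the PSI-(S)GD updates: w_{t+1}^(i) = w_t^(i) − η_t^(i) ‖w_t^(i)‖² ∇_{w^(i)} f_t(W_t, g_t), g_{t+1} = g_t − η_t^g ∇_g f_t(W_t, g_t). Let (Ŵ_t, ĝ_t) be the iterates of the same updates started from Ŵ_0 = T_a(W_0), ĝ_0 = g_0 for some a ∈ ℝ^m with all a_i > 0, where all blocks of W_0 are nonzero. Then for every t, Ŵ_t = T_a(W_t) and ĝ_t = g_t. -/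
open MeasureTheory RealInnerProductSpace
open scoped BigOperators

noncomputable section

/-- Partial (Fréchet) gradient of `f` in the parameters `g`. -/
def gradG {m p : ℕ} {d : Fin m → ℕ} (f : Wsp m d → Gsp p → ℝ)
    (W : Wsp m d) (g : Gsp p) : Gsp p :=
  gradient (fun u => f W u) g

lemma grad_smul_comp {E : Type*} [NormedAddCommGroup E] [InnerProductSpace ℝ E]
    [CompleteSpace E]
    (h : E → ℝ) (x : E) (c : ℝ) (hc : c ≠ 0) (hd : DifferentiableAt ℝ h x) :
    gradient (fun v => h (c⁻¹ • v)) (c • x) = c⁻¹ • gradient h x := by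
  have hx : c⁻¹ • (c • x) = x := by rw [smul_smul, inv_mul_cancel₀ hc, one_smul]
  have hsm : HasFDerivAt (fun v : E => c⁻¹ • v) (c⁻¹ • ContinuousLinearMap.id ℝ E) (c • x) :=
    (c⁻¹ • ContinuousLinearMap.id ℝ E).hasFDerivAt
  have hcomp : HasFDerivAt (fun v => h (c⁻¹ • v)) (c⁻¹ • fderiv ℝ h x) (c • x) := by
    have h2 : HasFDerivAt h (fderiv ℝ h x) (c⁻¹ • (c • x)) := by
      rw [hx]; exact hd.hasFDerivAt
    have := h2.comp (c • x) hsm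
    refine this.congr_fderiv ?_
    ext v
    simp [mul_comm]
  unfold gradient
  rw [hcomp.fderiv, _root_.map_smul]

lemma diffAt_partial {m p : ℕ} {d : Fin m → ℕ} {F : Wsp m d → Gsp p → ℝ}
    (hf : Differentiable ℝ fun q : Wsp m d × Gsp p => F q.1 q.2)
    (W : Wsp m d) (g : Gsp p) (i : Fin m) (x : EuclideanSpace ℝ (Fin (d i))) :
    DifferentiableAt ℝ (fun v => F (WithLp.toLp 2 (Function.update W i v)) g) x := by
  classical
  set L : EuclideanSpace ℝ (Fin (d i)) →L[ℝ] Wsp m d :=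
    (PiLp.continuousLinearEquiv 2 ℝ (fun j => EuclideanSpace ℝ (Fin (d j)))).symm.toContinuousLinearMap.comp
    (LinearMap.toContinuousLinearMap
      (LinearMap.single ℝ (fun j => EuclideanSpace ℝ (Fin (d j))) i)) with hL
  have heq : (fun v : EuclideanSpace ℝ (Fin (d i)) => F (WithLp.toLp 2 (Function.update W i v)) g)
      = fun v => F (W + L (v - W i)) g := by
    funext v
    congr 1
    refine PiLp.ext fun j => ?_
    show Function.update W i v j = W j + Pi.single (M := fun j => EuclideanSpace ℝ (Fin (d j))) i (v - W i) j
    by_cases hj : j = i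
    · subst hj
      rw [Function.update_self, Pi.single_eq_same, add_sub_cancel]
    · rw [Function.update_of_ne hj, Pi.single_eq_of_ne hj, add_zero]
  rw [heq]
  have h1 : Differentiable ℝ (fun v : EuclideanSpace ℝ (Fin (d i)) =>
      ((W + L (v - W i), g) : Wsp m d × Gsp p)) := by
    refine Differentiable.prodMk ?_ (differentiable_const g)
    exact (differentiable_const W).add
      (L.differentiable.comp (differentiable_id.sub (differentiable_const (W i))))
  exact (hf.comp h1) x

lemma gradW_rescale {m p : ℕ} {d : Fin m → ℕ} {F : Wsp m d → Gsp p → ℝ}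
    (hf : Differentiable ℝ fun q : Wsp m d × Gsp p => F q.1 q.2)
    (hPSI : PSI F) (a : Fin m → ℝ) (ha : ∀ i, 0 < a i)
    (W : Wsp m d) (g : Gsp p) (i : Fin m) :
    gradW F (rescale a W) g i = (a i)⁻¹ • gradW F W g i := by
  have key : (fun v => F (WithLp.toLp 2 (Function.update (rescale a W) i v)) g)
      = fun v => (fun u => F (WithLp.toLp 2 (Function.update W i u)) g) ((a i)⁻¹ • v) := by
    funext v
    have hupd : WithLp.toLp 2 (Function.update (rescale a W) i v)
        = rescale a (WithLp.toLp 2 (Function.update W i ((a i)⁻¹ • v))) := by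
      refine PiLp.ext fun j => ?_
      by_cases hj : j = i
      · subst hj
        simp [rescale, smul_smul, mul_inv_cancel₀ (ha j).ne']
      · simp [rescale, Function.update_of_ne hj]
    rw [hupd, hPSI a ha]
  show gradient (fun v => F (WithLp.toLp 2 (Function.update (rescale a W) i v)) g) (a i • W i)
      = (a i)⁻¹ • gradW F W g i
  rw [key]
  exact grad_smul_comp _ _ _ (ha i).ne' (diffAt_partial hf W g i (W i))

lemma gradG_rescale {m p : ℕ} {d : Fin m → ℕ} {F : Wsp m d → Gsp p → ℝ}
    (hPSI : PSI F) (a : Fin m → ℝ) (ha : ∀ i, 0 < a i)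
    (W : Wsp m d) (g : Gsp p) :
    gradG F (rescale a W) g = gradG F W g := by
  unfold gradG
  congr 1
  funext u
  exact hPSI a ha W u

/-- PSI-(S)GD iterates started from positively scale-equivalent points
stay positively scale-equivalent: if `Ŵ₀ = T_a(W₀)` and `ĝ₀ = g₀`, then
`Ŵ_t = T_a(W_t)` and `ĝ_t = g_t` for every `t`. -/
theorem stmt10 {m p : ℕ} {d : Fin m → ℕ} (f : ℕ → Wsp m d → Gsp p → ℝ)
    (hdiff : ∀ t, Differentiable ℝ fun q : Wsp m d × Gsp p => f t q.1 q.2)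
    (hPSI : ∀ t, PSI (f t))
    (η : ℕ → Fin m → ℝ) (hη : ∀ t i, 0 < η t i)
    (ηg : ℕ → ℝ) (hηg : ∀ t, 0 < ηg t)
    (W W' : ℕ → Wsp m d) (g g' : ℕ → Gsp p)
    (a : Fin m → ℝ) (ha : ∀ i, 0 < a i)
    (hW0nz : ∀ i, W 0 i ≠ 0)
    (hW : ∀ t i, W (t + 1) i
      = W t i - (η t i * ‖W t i‖ ^ 2) • gradW (f t) (W t) (g t) i)
    (hg : ∀ t, g (t + 1) = g t - ηg t • gradG (f t) (W t) (g t))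
    (hW' : ∀ t i, W' (t + 1) i
      = W' t i - (η t i * ‖W' t i‖ ^ 2) • gradW (f t) (W' t) (g' t) i)
    (hg' : ∀ t, g' (t + 1) = g' t - ηg t • gradG (f t) (W' t) (g' t))
    (hW'0 : W' 0 = rescale a (W 0)) (hg'0 : g' 0 = g 0) :
    ∀ t, W' t = rescale a (W t) ∧ g' t = g t := by
  intro t
  induction t with
  | zero => exact ⟨hW'0, hg'0⟩
  | succ t ih =>
    obtain ⟨ihW, ihg⟩ := ih
    constructor
    · refine PiLp.ext fun i => ?_
      rw [hW' t i, ihW, ihg]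
      rw [gradW_rescale (hdiff t) (hPSI t) a ha (W t) (g t) i]
      show a i • W t i - (η t i * ‖a i • W t i‖ ^ 2) • (a i)⁻¹ • gradW (f t) (W t) (g t) i
        = a i • W (t + 1) i
      rw [hW t i, smul_sub, smul_smul, smul_smul]
      congr 1
      congr 1
      have hai : a i ≠ 0 := (ha i).ne'
      rw [norm_smul, Real.norm_eq_abs, abs_of_pos (ha i)]
      field_simp
    · rw [hg' t, ihW, ihg, gradG_rescale (hPSI t) a ha (W t) (g t), hg t]

end
end

section
/- (Weight-norm bound for GD.) Let f be a twice continuously differentiable function of weights W = (w^(1), …, w^(m)) and parameters g ∈ ℝ^p, bounded below with infimum f*, positively scale-invariant in W, whose second-derivative blocks satisfy, at every point, ‖∇²_{w^(i) w^(j)} f‖_op ≤ L_ij^{ww}, ‖∇²_{w^(i) g} f‖_op ≤ L_i^{wg}, ‖∇²_{gg} f‖_op ≤ L^{gg} (positive constants); set L̃_{w^(i)} = L_i^{wg} + Σ_j L_ij^{ww} and L̃_g = m L^{gg} + Σ_i L_i^{wg}. Let (W_t, g_t) be generated by gradient descent w_{t+1}^(i) = w_t^(i) − (1/L̃_{w^(i)})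 ∇_{w^(i)} f(W_t, g_t), g_{t+1} = g_t − (1/L̃_g) ∇_g f(W_t, g_t), with all blocks of W_0 nonzero. Then for every t ≥ 0 and every index i, ‖w_t^(i)‖² ≤ ‖w_0^(i)‖² + 2 (f(W_0, g_0) − f*) / L̃_{w^(i)}. -/
open MeasureTheory RealInnerProductSpace
open scoped BigOperators

noncomputable section
set_option maxHeartbeats 1000000


/-- The joint space of weights and parameters, with the `ℓ²` (Euclidean) structure. -/
abbrev Dom (m : ℕ) (d : Fin m → ℕ) (p : ℕ) : Type := WithLp 2 (Wsp m d × Gsp p)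

/-- The full (Fréchet) gradient of `f` at `(W, g)`. -/
def fullGrad {m p : ℕ} {d : Fin m → ℕ} (f : Wsp m d → Gsp p → ℝ)
    (W : Wsp m d) (g : Gsp p) : Dom m d p :=
  gradient
    (fun q : Dom m d p =>
      f (WithLp.equiv 2 (Wsp m d × Gsp p) q).1 (WithLp.equiv 2 (Wsp m d × Gsp p) q).2)
    ((WithLp.equiv 2 (Wsp m d × Gsp p)).symm (W, g))

/-- Blockwise normalization `V = (w⁽¹⁾/‖w⁽¹⁾‖, …, w⁽ᵐ⁾/‖w⁽ᵐ⁾‖)`. -/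
def normalizeW {m : ℕ} {d : Fin m → ℕ} (W : Wsp m d) : Wsp m d :=
  WithLp.toLp 2 fun i => ‖W i‖⁻¹ • W i

/-- The second-derivative block `∇²_{w⁽ⁱ⁾ w⁽ʲ⁾} f (W, g)`, as a continuous linear map. -/
def hessWW {m p : ℕ} {d : Fin m → ℕ} (f : Wsp m d → Gsp p → ℝ)
    (W : Wsp m d) (g : Gsp p) (i j : Fin m) :
    EuclideanSpace ℝ (Fin (d j)) →L[ℝ] EuclideanSpace ℝ (Fin (d i)) :=
  fderiv ℝ (fun v => gradW f (WithLp.toLp 2 (Function.update W j v)) g i) (W j)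

/-- The second-derivative block `∇²_{w⁽ⁱ⁾ g} f (W, g)`, as a continuous linear map. -/
def hessWG {m p : ℕ} {d : Fin m → ℕ} (f : Wsp m d → Gsp p → ℝ)
    (W : Wsp m d) (g : Gsp p) (i : Fin m) :
    Gsp p →L[ℝ] EuclideanSpace ℝ (Fin (d i)) :=
  fderiv ℝ (fun u => gradW f W u i) g

/-- The second-derivative block `∇²_{gg} f (W, g)`, as a continuous linear map. -/
def hessGG {m p : ℕ} {d : Fin m → ℕ} (f : Wsp m d → Gsp p → ℝ)
    (W : Wsp m d) (g : Gsp p) : Gsp p →L[ℝ] Gsp p :=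
  fderiv ℝ (fun u => gradG f W u) g

def Jmap (m : ℕ) (d : Fin m → ℕ) (p : ℕ) (i : Fin m) :
    EuclideanSpace ℝ (Fin (d i)) →L[ℝ] Wsp m d × Gsp p :=
  LinearMap.toContinuousLinearMap <|
    (LinearMap.inl ℝ (Wsp m d) (Gsp p)).comp
      ((((PiLp.continuousLinearEquiv 2 ℝ fun j : Fin m => EuclideanSpace ℝ (Fin (d j))).symm :
          (∀ j, EuclideanSpace ℝ (Fin (d j))) →L[ℝ] Wsp m d) :
          (∀ j, EuclideanSpace ℝ (Fin (d j))) →ₗ[ℝ] Wsp m d).comp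
        (LinearMap.single ℝ (fun j : Fin m => EuclideanSpace ℝ (Fin (d j))) i))

def Kmap (m : ℕ) (d : Fin m → ℕ) (p : ℕ) : Gsp p →L[ℝ] Wsp m d × Gsp p :=
  ContinuousLinearMap.inr ℝ _ _

lemma Jmap_fst (i : Fin m) (v : EuclideanSpace ℝ (Fin (d i))) :
    (Jmap m d p i v).1 = (Pi.single i v : ∀ j, EuclideanSpace ℝ (Fin (d j))) := rfl

lemma Jmap_snd (i : Fin m) (v : EuclideanSpace ℝ (Fin (d i))) :
    (Jmap m d p i v).2 = 0 := rfl

lemma Kmap_apply (u : Gsp p) : Kmap m d p u = ((0 : Wsp m d), u) := rfl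

lemma decomp (Δ : Wsp m d × Gsp p) :
    (∑ i, Jmap m d p i (Δ.1 i)) + Kmap m d p Δ.2 = Δ := by
  refine Prod.ext ?_ ?_
  · have h1 : ((∑ i, Jmap m d p i (Δ.1 i)) + Kmap m d p Δ.2).1
        = ∑ i, (Jmap m d p i (Δ.1 i)).1 := by
      simp [Kmap_apply, Prod.fst_sum]
    rw [h1]
    ext j
    have h2 : (∑ i, (Jmap m d p i (Δ.1 i)).1) j
        = ∑ i, ((Jmap m d p i (Δ.1 i)).1) j := by
        rw [WithLp.ofLp_sum]; exact Finset.sum_apply _ _ _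
    rw [h2]
    simp only [Jmap_fst]
    rw [Finset.sum_eq_single j]
    · simp
    · intro b _ hb; exact Pi.single_eq_of_ne' hb _
    · intro h; exact absurd (Finset.mem_univ j) h
  · simp [Kmap_apply, Prod.snd_sum, Jmap_snd]

def Fful (f : Wsp m d → Gsp p → ℝ) : Wsp m d × Gsp p → ℝ := fun q => f q.1 q.2

lemma pointW_eq (W : Wsp m d) (g : Gsp p) (i : Fin m) (v : EuclideanSpace ℝ (Fin (d i))) :
    (W, g) + Jmap m d p i (v - W i) = (WithLp.toLp 2 (Function.update W i v), g) := by
  refine Prod.ext ?_ (by simp [Jmap])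
  ext j : 1
  show W j + (Pi.single i (v - W i) : ∀ j, EuclideanSpace ℝ (Fin (d j))) j = _
  rcases eq_or_ne j i with rfl | hj
  · simp
  · simp [Function.update_apply, hj, Pi.single_eq_of_ne hj]

lemma pointG_eq (W : Wsp m d) (g : Gsp p) (u : Gsp p) :
    (W, g) + Kmap m d p (u - g) = (W, u) := by
  refine Prod.ext (by simp [Kmap]) (by simp [Kmap])

lemma hasFDerivAt_pathW (W : Wsp m d) (g : Gsp p) (i : Fin m) :
    HasFDerivAt (fun v => (W, g) + Jmap m d p i (v - W i)) (Jmap m d p i) (W i) := by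
  have h1 : HasFDerivAt (fun v : EuclideanSpace ℝ (Fin (d i)) => v - W i)
      (ContinuousLinearMap.id ℝ _) (W i) := (hasFDerivAt_id _).sub_const _
  simpa using (((Jmap m d p i).hasFDerivAt.comp (W i) h1).const_add ((W, g)))

lemma hasFDerivAt_pathG (W : Wsp m d) (g : Gsp p) :
    HasFDerivAt (fun u => (W, g) + Kmap m d p (u - g)) (Kmap m d p) g := by
  have h1 : HasFDerivAt (fun u : Gsp p => u - g) (ContinuousLinearMap.id ℝ _) g :=
    (hasFDerivAt_id _).sub_const _
  simpa using (((Kmap m d p).hasFDerivAt.comp g h1).const_add ((W, g)))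

/-- abstract partial gradient -/
def pgrad {X : Type*} [NormedAddCommGroup X] [InnerProductSpace ℝ X] [CompleteSpace X]
    (f : Wsp m d → Gsp p → ℝ) (B : X →L[ℝ] Wsp m d × Gsp p) (y : Wsp m d × Gsp p) : X :=
  (InnerProductSpace.toDual ℝ X).symm ((fderiv ℝ (Fful f) y).comp B)

lemma pgrad_inner {X : Type*} [NormedAddCommGroup X] [InnerProductSpace ℝ X] [CompleteSpace X]
    (f : Wsp m d → Gsp p → ℝ) (B : X →L[ℝ] Wsp m d × Gsp p) (y : Wsp m d × Gsp p) (v : X) :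
    ⟪pgrad f B y, v⟫ = fderiv ℝ (Fful f) y (B v) := by
  simp [pgrad, InnerProductSpace.toDual_symm_apply]

lemma gradW_eq_pgrad (f : Wsp m d → Gsp p → ℝ)
    (hf : Differentiable ℝ (Fful f)) (W : Wsp m d) (g : Gsp p) (i : Fin m) :
    gradW f W g i = pgrad f (Jmap m d p i) (W, g) := by
  have hcomp : HasFDerivAt (fun v => f (WithLp.toLp 2 (Function.update W i v)) g)
      ((fderiv ℝ (Fful f) (W, g)).comp (Jmap m d p i)) (W i) := by
    have hpt : (W, g) + Jmap m d p i (W i - W i) = (W, g) := by simp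
    have houter : HasFDerivAt (Fful f) (fderiv ℝ (Fful f) (W, g))
        ((W, g) + Jmap m d p i (W i - W i)) := by rw [hpt]; exact (hf _).hasFDerivAt
    have := houter.comp (W i) (hasFDerivAt_pathW W g i)
    refine this.congr_of_eventuallyEq (Filter.Eventually.of_forall fun v => ?_)
    show f (WithLp.toLp 2 (Function.update W i v)) g = Fful f ((W, g) + Jmap m d p i (v - W i))
    rw [pointW_eq]; rfl
  rw [gradW, gradient, hcomp.fderiv]; rfl

lemma gradG_eq_pgrad (f : Wsp m d → Gsp p → ℝ)
    (hf : Differentiable ℝ (Fful f)) (W : Wsp m d) (g : Gsp p) :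
    gradG f W g = pgrad f (Kmap m d p) (W, g) := by
  have hcomp : HasFDerivAt (fun u => f W u)
      ((fderiv ℝ (Fful f) (W, g)).comp (Kmap m d p)) g := by
    have hpt : (W, g) + Kmap m d p (g - g) = (W, g) := by simp
    have houter : HasFDerivAt (Fful f) (fderiv ℝ (Fful f) (W, g))
        ((W, g) + Kmap m d p (g - g)) := by rw [hpt]; exact (hf _).hasFDerivAt
    have := houter.comp g (hasFDerivAt_pathG W g)
    refine this.congr_of_eventuallyEq (Filter.Eventually.of_forall fun u => ?_)
    show f W u = Fful f ((W, g) + Kmap m d p (u - g))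
    rw [pointG_eq]; rfl
  rw [gradG, gradient, hcomp.fderiv]; rfl

lemma pgrad_comp_hasFDerivAt {X Y : Type*} [NormedAddCommGroup X] [InnerProductSpace ℝ X]
    [CompleteSpace X] [NormedAddCommGroup Y] [NormedSpace ℝ Y]
    (f : Wsp m d → Gsp p → ℝ) (hf : ContDiff ℝ 2 (Fful f))
    (B : X →L[ℝ] Wsp m d × Gsp p) (π : Y → Wsp m d × Gsp p)
    (A : Y →L[ℝ] Wsp m d × Gsp p) (v₀ : Y) (hπ : HasFDerivAt π A v₀)
    (y : Wsp m d × Gsp p) (hy : π v₀ = y) :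
    ∃ LL : Y →L[ℝ] X, HasFDerivAt (fun v => pgrad f B (π v)) LL v₀ ∧
      ∀ u w, ⟪LL u, w⟫ = fderiv ℝ (fderiv ℝ (Fful f)) y (A u) (B w) := by
  subst hy
  have hC1 : ContDiff ℝ 1 (fderiv ℝ (Fful f)) := hf.fderiv_right (m := 1) le_rfl
  have hD2 : HasFDerivAt (fderiv ℝ (Fful f)) (fderiv ℝ (fderiv ℝ (Fful f)) (π v₀)) (π v₀) :=
    (hC1.differentiable (by norm_num) _).hasFDerivAt
  set eCLM : ((X →L[ℝ] ℝ) →L[ℝ] X) :=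
    (InnerProductSpace.toDual ℝ X).symm.toLinearIsometry.toContinuousLinearMap with heC
  set pre : ((Wsp m d × Gsp p) →L[ℝ] ℝ) →L[ℝ] (X →L[ℝ] ℝ) :=
    (ContinuousLinearMap.compL ℝ X (Wsp m d × Gsp p) ℝ).flip B with hpre
  refine ⟨(eCLM.comp pre).comp ((fderiv ℝ (fderiv ℝ (Fful f)) (π v₀)).comp A), ?_, ?_⟩
  · have hmid : HasFDerivAt (fun v => fderiv ℝ (Fful f) (π v))
        ((fderiv ℝ (fderiv ℝ (Fful f)) (π v₀)).comp A) v₀ := hD2.comp v₀ hπ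
    have := (eCLM.comp pre).hasFDerivAt.comp v₀ hmid
    exact this
  · intro u w
    simp [heC, hpre, pgrad, InnerProductSpace.toDual_symm_apply]

lemma hessWW_inner (f : Wsp m d → Gsp p → ℝ) (hf : ContDiff ℝ 2 (Fful f))
    (W : Wsp m d) (g : Gsp p) (i j : Fin m) (u : EuclideanSpace ℝ (Fin (d j)))
    (w : EuclideanSpace ℝ (Fin (d i))) :
    ⟪hessWW f W g i j u, w⟫ =
      fderiv ℝ (fderiv ℝ (Fful f)) (W, g) (Jmap m d p j u) (Jmap m d p i w) := by
  obtain ⟨LL, hLL, hprop⟩ := pgrad_comp_hasFDerivAt f hf (Jmap m d p i)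
    (fun v => (W, g) + Jmap m d p j (v - W j)) (Jmap m d p j) (W j)
    (hasFDerivAt_pathW W g j) (W, g) (by simp)
  have hfe : (fun v => gradW f (WithLp.toLp 2 (Function.update W j v)) g i)
      = fun v => pgrad f (Jmap m d p i) ((W, g) + Jmap m d p j (v - W j)) := by
    funext v
    rw [gradW_eq_pgrad f (hf.differentiable (by norm_num)), pointW_eq]
  have : hessWW f W g i j = LL := by
    rw [hessWW, hfe]; exact hLL.fderiv
  rw [this]; exact hprop u w

lemma hessWG_inner (f : Wsp m d → Gsp p → ℝ) (hf : ContDiff ℝ 2 (Fful f))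
    (W : Wsp m d) (g : Gsp p) (i : Fin m) (u : Gsp p)
    (w : EuclideanSpace ℝ (Fin (d i))) :
    ⟪hessWG f W g i u, w⟫ =
      fderiv ℝ (fderiv ℝ (Fful f)) (W, g) (Kmap m d p u) (Jmap m d p i w) := by
  obtain ⟨LL, hLL, hprop⟩ := pgrad_comp_hasFDerivAt f hf (Jmap m d p i)
    (fun u' => (W, g) + Kmap m d p (u' - g)) (Kmap m d p) g
    (hasFDerivAt_pathG W g) (W, g) (by simp)
  have hfe : (fun u' => gradW f W u' i)
      = fun u' => pgrad f (Jmap m d p i) ((W, g) + Kmap m d p (u' - g)) := by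
    funext u'
    rw [gradW_eq_pgrad f (hf.differentiable (by norm_num)), pointG_eq]
  have : hessWG f W g i = LL := by
    rw [hessWG, hfe]; exact hLL.fderiv
  rw [this]; exact hprop u w

lemma hessGG_inner (f : Wsp m d → Gsp p → ℝ) (hf : ContDiff ℝ 2 (Fful f))
    (W : Wsp m d) (g : Gsp p) (u w : Gsp p) :
    ⟪hessGG f W g u, w⟫ =
      fderiv ℝ (fderiv ℝ (Fful f)) (W, g) (Kmap m d p u) (Kmap m d p w) := by
  obtain ⟨LL, hLL, hprop⟩ := pgrad_comp_hasFDerivAt f hf (Kmap m d p)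
    (fun u' => (W, g) + Kmap m d p (u' - g)) (Kmap m d p) g
    (hasFDerivAt_pathG W g) (W, g) (by simp)
  have hfe : (fun u' => gradG f W u')
      = fun u' => pgrad f (Kmap m d p) ((W, g) + Kmap m d p (u' - g)) := by
    funext u'
    rw [gradG_eq_pgrad f (hf.differentiable (by norm_num)), pointG_eq]
  have : hessGG f W g = LL := by
    rw [hessGG, hfe]; exact hLL.fderiv
  rw [this]; exact hprop u w

lemma taylor_like {φ φ' φ'' : ℝ → ℝ} {M : ℝ}
    (hφ : ∀ s, HasDerivAt φ (φ' s) s)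
    (h2 : ∀ s, HasDerivAt φ' (φ'' s) s)
    (hM : ∀ s ∈ Set.Icc (0:ℝ) 1, φ'' s ≤ M) :
    φ 1 ≤ φ 0 + φ' 0 + M / 2 := by
  have key : ∀ s ∈ Set.Ioo (0:ℝ) 1, φ' s ≤ φ' 0 + M * s := by
    intro s hs
    obtain ⟨c, hc, hceq⟩ := exists_hasDerivAt_eq_slope φ' φ'' hs.1
      (fun x _ => (h2 x).continuousAt.continuousWithinAt) (fun x _ => h2 x)
    have hcM : φ'' c ≤ M := hM c ⟨le_of_lt hc.1, le_trans (le_of_lt hc.2) (le_of_lt hs.2)⟩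
    have : (φ' s - φ' 0) / (s - 0) ≤ M := hceq ▸ hcM
    rw [sub_zero] at this
    have hs0 : (0:ℝ) < s := hs.1
    nlinarith [(div_le_iff₀ hs0).mp this]
  set χ : ℝ → ℝ := fun s => φ 0 + s * φ' 0 + M * s ^ 2 / 2 - φ s with hχ
  have hχd : ∀ s, HasDerivAt χ (φ' 0 + M * s - φ' s) s := by
    intro s
    have h1 : HasDerivAt (fun s : ℝ => φ 0 + s * φ' 0 + M * s ^ 2 / 2) (φ' 0 + M * s) s := by
      have := (((hasDerivAt_id s).mul_const (φ' 0)).const_add (φ 0)).add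
        (((hasDerivAt_pow 2 s).const_mul M).div_const 2)
      refine this.congr_deriv ?_
      push_cast; ring
    exact h1.sub (hφ s)
  have mono : MonotoneOn χ (Set.Icc 0 1) := by
    apply monotoneOn_of_deriv_nonneg (convex_Icc 0 1)
    · exact fun s _ => (hχd s).continuousAt.continuousWithinAt
    · exact fun s _ => ((hχd s).differentiableAt).differentiableWithinAt
    · intro s hs
      rw [interior_Icc] at hs
      rw [(hχd s).deriv]
      have := key s hs
      linarith
  have h01 := mono (Set.left_mem_Icc.mpr zero_le_one) (Set.right_mem_Icc.mpr zero_le_one)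
    zero_le_one
  simp only [hχ, one_mul, one_pow, mul_zero, zero_mul, mul_one] at h01
  norm_num at h01
  linarith

lemma amgm_cross {t a b x y : ℝ} (hx : 0 ≤ x) (hy : 0 ≤ y) (ha : 0 ≤ a) (hb : 0 ≤ b)
    (h1 : t ≤ a * x * y) (h2 : t ≤ b * y * x) :
    t ≤ (a * x ^ 2 + b * y ^ 2) / 2 := by
  rcases le_total a b with hab | hab
  · nlinarith [sq_nonneg (x - y)]
  · nlinarith [sq_nonneg (x - y)]

lemma amgm_cross' {t a b x y : ℝ} (ha : 0 ≤ a) (hb : 0 ≤ b)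
    (h1 : t ≤ a * (x * y)) (h2 : t ≤ b * (x * y)) :
    t ≤ (a * x ^ 2 + b * y ^ 2) / 2 := by
  rcases le_total a b with hab | hab
  · nlinarith [sq_nonneg (x - y)]
  · nlinarith [sq_nonneg (x - y)]

lemma D2_bound (f : Wsp m d → Gsp p → ℝ) (hf : ContDiff ℝ 2 (Fful f))
    (Lww : Fin m → Fin m → ℝ) (Lwg : Fin m → ℝ) (Lgg : ℝ)
    (hLwwpos : ∀ i j, 0 < Lww i j) (hLwgpos : ∀ i, 0 < Lwg i) (hLggpos : 0 < Lgg)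
    (hww : ∀ W g i j, ‖hessWW f W g i j‖ ≤ Lww i j)
    (hwg : ∀ W g i, ‖hessWG f W g i‖ ≤ Lwg i)
    (hgg : ∀ W g, ‖hessGG f W g‖ ≤ Lgg)
    (Ltw : Fin m → ℝ) (Ltg : ℝ)
    (hLtw : ∀ i, Ltw i = Lwg i + ∑ j, Lww i j)
    (hLtg : Ltg = m * Lgg + ∑ i, Lwg i)
    (hm : 0 < m)
    (W : Wsp m d) (g : Gsp p) (Δ : Wsp m d × Gsp p) :
    fderiv ℝ (fderiv ℝ (Fful f)) (W, g) Δ Δ ≤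
      (∑ i, Ltw i * ‖Δ.1 i‖ ^ 2) + Ltg * ‖Δ.2‖ ^ 2 := by
  set D2 := fderiv ℝ (fderiv ℝ (Fful f)) (W, g) with hD2
  have hsym : ∀ u v, D2 u v = D2 v u := fun u v =>
    (hf.contDiffAt.isSymmSndFDerivAt (by simp)).eq u v
  set x : Fin m → ℝ := fun i => ‖Δ.1 i‖ with hx
  set y : ℝ := ‖Δ.2‖ with hy
  have ea : ∀ (a : (Wsp m d × Gsp p) →L[ℝ] ℝ),
      a Δ = (∑ i, a (Jmap m d p i (Δ.1 i))) + a (Kmap m d p Δ.2) := by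
    intro a
    conv_lhs => rw [← decomp Δ]
    rw [map_add, map_sum]
  have e1 : D2 Δ = (∑ j, D2 (Jmap m d p j (Δ.1 j))) + D2 (Kmap m d p Δ.2) := by
    conv_lhs => rw [← decomp Δ]
    rw [map_add, map_sum]
  have hexp : D2 Δ Δ =
      (∑ j, ((∑ i, D2 (Jmap m d p j (Δ.1 j)) (Jmap m d p i (Δ.1 i)))
          + D2 (Jmap m d p j (Δ.1 j)) (Kmap m d p Δ.2)))
      + ((∑ i, D2 (Kmap m d p Δ.2) (Jmap m d p i (Δ.1 i)))
          + D2 (Kmap m d p Δ.2) (Kmap m d p Δ.2)) := by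
    rw [e1, ContinuousLinearMap.add_apply, ContinuousLinearMap.sum_apply]
    rw [ea (D2 (Kmap m d p Δ.2))]
    congr 1
    exact Finset.sum_congr rfl fun j _ => ea _
  -- bound the WW double sum
  have tWW : ∀ i j, D2 (Jmap m d p j (Δ.1 j)) (Jmap m d p i (Δ.1 i)) ≤
      (Lww i j * x i ^ 2 + Lww j i * x j ^ 2) / 2 := by
    intro i j
    have h1 : D2 (Jmap m d p j (Δ.1 j)) (Jmap m d p i (Δ.1 i)) ≤ Lww i j * (x i * x j) := by
      rw [← hessWW_inner f hf W g i j]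
      calc ⟪hessWW f W g i j (Δ.1 j), Δ.1 i⟫ ≤ ‖hessWW f W g i j (Δ.1 j)‖ * ‖Δ.1 i‖ :=
            real_inner_le_norm _ _
        _ ≤ (Lww i j * ‖Δ.1 j‖) * ‖Δ.1 i‖ := by
            gcongr
            exact (hessWW f W g i j).le_of_opNorm_le (hww W g i j) _
        _ = Lww i j * (x i * x j) := by rw [hx]; ring
    have h2 : D2 (Jmap m d p j (Δ.1 j)) (Jmap m d p i (Δ.1 i)) ≤ Lww j i * (x i * x j) := by
      rw [hsym, ← hessWW_inner f hf W g j i]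
      calc ⟪hessWW f W g j i (Δ.1 i), Δ.1 j⟫ ≤ ‖hessWW f W g j i (Δ.1 i)‖ * ‖Δ.1 j‖ :=
            real_inner_le_norm _ _
        _ ≤ (Lww j i * ‖Δ.1 i‖) * ‖Δ.1 j‖ := by
            gcongr
            exact (hessWW f W g j i).le_of_opNorm_le (hww W g j i) _
        _ = Lww j i * (x i * x j) := by rw [hx]; ring
    exact amgm_cross' (hLwwpos i j).le (hLwwpos j i).le h1 h2
  have tWG : ∀ j, D2 (Jmap m d p j (Δ.1 j)) (Kmap m d p Δ.2) ≤
      Lwg j * (x j ^ 2 + y ^ 2) / 2 := by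
    intro j
    have h1 : D2 (Jmap m d p j (Δ.1 j)) (Kmap m d p Δ.2) ≤ Lwg j * (y * x j) := by
      rw [hsym, ← hessWG_inner f hf W g j]
      calc ⟪hessWG f W g j Δ.2, Δ.1 j⟫ ≤ ‖hessWG f W g j Δ.2‖ * ‖Δ.1 j‖ :=
            real_inner_le_norm _ _
        _ ≤ (Lwg j * ‖Δ.2‖) * ‖Δ.1 j‖ := by
            gcongr
            exact (hessWG f W g j).le_of_opNorm_le (hwg W g j) _
        _ = Lwg j * (y * x j) := by rw [hx, hy]; ring
    nlinarith [sq_nonneg (x j - y), (hLwgpos j).le]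
  have tGW : ∀ j, D2 (Kmap m d p Δ.2) (Jmap m d p j (Δ.1 j)) ≤
      Lwg j * (x j ^ 2 + y ^ 2) / 2 := by
    intro j
    rw [hsym]
    exact tWG j
  have tGG : D2 (Kmap m d p Δ.2) (Kmap m d p Δ.2) ≤ Lgg * y ^ 2 := by
    rw [← hessGG_inner f hf W g]
    calc ⟪hessGG f W g Δ.2, Δ.2⟫ ≤ ‖hessGG f W g Δ.2‖ * ‖Δ.2‖ := real_inner_le_norm _ _
      _ ≤ (Lgg * ‖Δ.2‖) * ‖Δ.2‖ := by
          gcongr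
          exact (hessGG f W g).le_of_opNorm_le (hgg W g) _
      _ = Lgg * y ^ 2 := by rw [hy]; ring
  -- sum the bounds
  have big : D2 Δ Δ ≤
      (∑ j, ((∑ i, (Lww i j * x i ^ 2 + Lww j i * x j ^ 2) / 2)
          + Lwg j * (x j ^ 2 + y ^ 2) / 2))
      + ((∑ i, Lwg i * (x i ^ 2 + y ^ 2) / 2) + Lgg * y ^ 2) := by
    refine le_trans (le_of_eq hexp) (add_le_add (Finset.sum_le_sum fun j _ =>
      add_le_add (Finset.sum_le_sum fun i _ => tWW i j) (tWG j))
      (add_le_add (Finset.sum_le_sum fun i _ => tGW i) tGG))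
  refine le_trans big ?_
  -- now pure algebra with sums
  have swap : ∑ j, ∑ i, Lww i j * x i ^ 2 = ∑ i, (∑ j, Lww i j) * x i ^ 2 := by
    rw [Finset.sum_comm]
    exact Finset.sum_congr rfl fun i _ => by rw [Finset.sum_mul]
  have pull : ∀ j, ∑ i, Lww j i * x j ^ 2 = (∑ i, Lww j i) * x j ^ 2 := fun j => by
    rw [Finset.sum_mul]
  have key1 : ∑ j, ∑ i, (Lww i j * x i ^ 2 + Lww j i * x j ^ 2) / 2
      = ∑ i, (∑ j, Lww i j) * x i ^ 2 := by
    have : ∀ j, ∑ i, (Lww i j * x i ^ 2 + Lww j i * x j ^ 2) / 2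
        = ((∑ i, Lww i j * x i ^ 2) + (∑ i, Lww j i) * x j ^ 2) / 2 := by
      intro j
      rw [← Finset.sum_div, Finset.sum_add_distrib, pull j]
    simp only [this]
    rw [← Finset.sum_div, Finset.sum_add_distrib, swap]
    ring
  have hm1 : (1:ℝ) ≤ (m:ℝ) := by exact_mod_cast hm
  have e2 : ∀ (c : Fin m → ℝ), ∑ j, c j * (x j ^ 2 + y ^ 2) / 2
      = (∑ j, c j * x j ^ 2) / 2 + (∑ j, c j) * y ^ 2 / 2 := by
    intro c
    have hc : ∀ j : Fin m, c j * (x j ^ 2 + y ^ 2) / 2 = c j * x j ^ 2 / 2 + c j * y ^ 2 / 2 :=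
      fun j => by ring
    rw [Finset.sum_congr rfl fun j _ => hc j, Finset.sum_add_distrib,
      ← Finset.sum_div, ← Finset.sum_div, ← Finset.sum_mul]
  have e3 : ∑ i, Ltw i * x i ^ 2
      = (∑ i, Lwg i * x i ^ 2) + ∑ i, (∑ j, Lww i j) * x i ^ 2 := by
    rw [← Finset.sum_add_distrib]
    exact Finset.sum_congr rfl fun i _ => by rw [hLtw i]; ring
  rw [Finset.sum_add_distrib, key1, e2 Lwg, e3, hLtg]
  have hfin : Lgg * y ^ 2 ≤ (m:ℝ) * Lgg * y ^ 2 := by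
    have h0 : 0 ≤ ((m:ℝ) - 1) * Lgg * y ^ 2 :=
      mul_nonneg (mul_nonneg (by linarith) hLggpos.le) (sq_nonneg y)
    nlinarith [h0]
  linarith

lemma hasFDerivAt_updateW (f : Wsp m d → Gsp p → ℝ)
    (hfd : Differentiable ℝ (Fful f)) (W : Wsp m d) (g : Gsp p) (i : Fin m) :
    HasFDerivAt (fun v => f (WithLp.toLp 2 (Function.update W i v)) g)
      ((fderiv ℝ (Fful f) (W, g)).comp (Jmap m d p i)) (W i) := by
  have hpt : (W, g) + Jmap m d p i (W i - W i) = (W, g) := by simp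
  have houter : HasFDerivAt (Fful f) (fderiv ℝ (Fful f) (W, g))
      ((W, g) + Jmap m d p i (W i - W i)) := by rw [hpt]; exact (hfd _).hasFDerivAt
  have := houter.comp (W i) (hasFDerivAt_pathW W g i)
  refine this.congr_of_eventuallyEq (Filter.Eventually.of_forall fun v => ?_)
  show f (WithLp.toLp 2 (Function.update W i v)) g = Fful f ((W, g) + Jmap m d p i (v - W i))
  rw [pointW_eq]; rfl

lemma orth (f : Wsp m d → Gsp p → ℝ) (hfd : Differentiable ℝ (Fful f)) (hPSI : PSI f)
    (W : Wsp m d) (g : Gsp p) (i : Fin m) :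
    ⟪gradW f W g i, W i⟫ = 0 := by
  have hpath : HasDerivAt (fun s : ℝ => (1 + s) • W i) (W i) 0 := by
    simpa using ((hasDerivAt_const (0:ℝ) (1:ℝ)).add (hasDerivAt_id (0:ℝ))).smul_const (W i)
  have h00 : (1 + (0:ℝ)) • W i = W i := by norm_num
  have hout := hasFDerivAt_updateW f hfd W g i
  rw [← h00] at hout
  have hcomp : HasDerivAt (fun s : ℝ => f (WithLp.toLp 2 (Function.update W i ((1 + s) • W i))) g)
      (((fderiv ℝ (Fful f) (W, g)).comp (Jmap m d p i)) (W i)) 0 := by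
    have h2 := hout.comp_hasDerivAt 0 hpath
    simpa [Function.comp_def] using h2
  have hconst : (fun s : ℝ => f (WithLp.toLp 2 (Function.update W i ((1 + s) • W i))) g)
      =ᶠ[nhds (0:ℝ)] fun _ => f W g := by
    filter_upwards [isOpen_Ioi.mem_nhds (show (-1:ℝ) < 0 by norm_num)] with s hs
    have hs' : (-1:ℝ) < s := hs
    set a : Fin m → ℝ := fun j => if j = i then 1 + s else 1 with ha
    have hapos : ∀ j, 0 < a j := by
      intro j; rw [ha]; dsimp only
      split
      · linarith
      · norm_num
    have hres : rescale a W = WithLp.toLp 2 (Function.update W i ((1 + s) • W i)) := by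
      ext j : 1
      show a j • W j = _
      rcases eq_or_ne j i with rfl | hj
      · simp [ha]
      · simp [ha, hj, Function.update_apply]
    rw [← hres, hPSI a hapos W g]
  have hzero : HasDerivAt (fun s : ℝ => f (WithLp.toLp 2 (Function.update W i ((1 + s) • W i))) g) 0 0 :=
    (hasDerivAt_const (0:ℝ) (f W g)).congr_of_eventuallyEq hconst
  have huniq := hcomp.unique hzero
  rw [gradW_eq_pgrad f hfd, pgrad_inner]
  exact huniq

lemma fderiv_decomp (f : Wsp m d → Gsp p → ℝ) (hfd : Differentiable ℝ (Fful f))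
    (W : Wsp m d) (g : Gsp p) (Δ : Wsp m d × Gsp p) :
    fderiv ℝ (Fful f) (W, g) Δ =
      (∑ i, ⟪gradW f W g i, Δ.1 i⟫) + ⟪gradG f W g, Δ.2⟫ := by
  conv_lhs => rw [← decomp Δ]
  rw [map_add, map_sum]
  simp only [gradW_eq_pgrad f hfd, gradG_eq_pgrad f hfd, pgrad_inner]

lemma descent_step (f : Wsp m d → Gsp p → ℝ) (hf : ContDiff ℝ 2 (Fful f))
    (Lww : Fin m → Fin m → ℝ) (Lwg : Fin m → ℝ) (Lgg : ℝ)
    (hLwwpos : ∀ i j, 0 < Lww i j) (hLwgpos : ∀ i, 0 < Lwg i) (hLggpos : 0 < Lgg)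
    (hww : ∀ W g i j, ‖hessWW f W g i j‖ ≤ Lww i j)
    (hwg : ∀ W g i, ‖hessWG f W g i‖ ≤ Lwg i)
    (hgg : ∀ W g, ‖hessGG f W g‖ ≤ Lgg)
    (Ltw : Fin m → ℝ) (Ltg : ℝ)
    (hLtw : ∀ i, Ltw i = Lwg i + ∑ j, Lww i j)
    (hLtg : Ltg = m * Lgg + ∑ i, Lwg i)
    (hm : 0 < m)
    (W W' : Wsp m d) (g g' : Gsp p)
    (hW' : ∀ i, W' i = W i - (1 / Ltw i) • gradW f W g i)
    (hg' : g' = g - (1 / Ltg) • gradG f W g) :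
    ∀ i, f W' g' + (1 / (2 * Ltw i)) * ‖gradW f W g i‖ ^ 2 ≤ f W g := by
  have hfd : Differentiable ℝ (Fful f) := hf.differentiable (by norm_num)
  have hLtwpos : ∀ i, 0 < Ltw i := fun i => by
    rw [hLtw i]
    exact add_pos_of_pos_of_nonneg (hLwgpos i)
      (Finset.sum_nonneg fun j _ => (hLwwpos i j).le)
  have hLtgpos : 0 < Ltg := by
    have hm1 : (1:ℝ) ≤ (m:ℝ) := by exact_mod_cast hm
    rw [hLtg]
    have : 0 < (m:ℝ) * Lgg := by nlinarith
    exact add_pos_of_pos_of_nonneg this (Finset.sum_nonneg fun j _ => (hLwgpos j).le)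
  set Δ : Wsp m d × Gsp p :=
    ((WithLp.toLp 2 (fun i => -((1 / Ltw i) • gradW f W g i)) : Wsp m d), -((1 / Ltg) • gradG f W g)) with hΔ
  have hΔ1 : ∀ i, Δ.1 i = -((1 / Ltw i) • gradW f W g i) := fun i => rfl
  have hΔ2 : Δ.2 = -((1 / Ltg) • gradG f W g) := rfl
  have hline : ∀ s : ℝ, HasDerivAt (fun s : ℝ => (W, g) + s • Δ) Δ s := fun s => by
    simpa using ((hasDerivAt_id s).smul_const Δ).const_add (W, g)
  have hφ : ∀ s, HasDerivAt (fun s : ℝ => Fful f ((W, g) + s • Δ))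
      (fderiv ℝ (Fful f) ((W, g) + s • Δ) Δ) s := fun s =>
    (hfd _).hasFDerivAt.comp_hasDerivAt s (hline s)
  have hC1 : ContDiff ℝ 1 (fderiv ℝ (Fful f)) := hf.fderiv_right (m := 1) le_rfl
  have hφ' : ∀ s, HasDerivAt (fun s : ℝ => fderiv ℝ (Fful f) ((W, g) + s • Δ) Δ)
      (fderiv ℝ (fderiv ℝ (Fful f)) ((W, g) + s • Δ) Δ Δ) s := by
    intro s
    have hmid : HasDerivAt (fun s : ℝ => fderiv ℝ (Fful f) ((W, g) + s • Δ))
        (fderiv ℝ (fderiv ℝ (Fful f)) ((W, g) + s • Δ) Δ) s :=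
      ((hC1.differentiable (by norm_num) _).hasFDerivAt).comp_hasDerivAt s (hline s)
    have := (ContinuousLinearMap.apply ℝ ℝ Δ).hasFDerivAt.comp_hasDerivAt s hmid
    exact this
  set M : ℝ := (∑ i, (1 / Ltw i) * ‖gradW f W g i‖ ^ 2)
      + (1 / Ltg) * ‖gradG f W g‖ ^ 2 with hM
  have hn1 : ∀ i, ‖Δ.1 i‖ = (1 / Ltw i) * ‖gradW f W g i‖ := by
    intro i
    rw [hΔ1 i, norm_neg, norm_smul, Real.norm_eq_abs,
      abs_of_pos (by have := hLtwpos i; positivity : (0:ℝ) < 1 / Ltw i)]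
  have hn2 : ‖Δ.2‖ = (1 / Ltg) * ‖gradG f W g‖ := by
    rw [hΔ2, norm_neg, norm_smul, Real.norm_eq_abs,
      abs_of_pos (by have := hLtgpos; positivity : (0:ℝ) < 1 / Ltg)]
  have hMeq : (∑ i, Ltw i * ‖Δ.1 i‖ ^ 2) + Ltg * ‖Δ.2‖ ^ 2 = M := by
    rw [hM]
    congr 1
    · refine Finset.sum_congr rfl fun i _ => ?_
      rw [hn1 i]
      have h := (hLtwpos i).ne'
      field_simp
    · rw [hn2]
      have h := hLtgpos.ne'
      field_simp
  have hbound : ∀ s ∈ Set.Icc (0:ℝ) 1,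
      fderiv ℝ (fderiv ℝ (Fful f)) ((W, g) + s • Δ) Δ Δ ≤ M := by
    intro s _
    have hb := D2_bound f hf Lww Lwg Lgg hLwwpos hLwgpos hLggpos hww hwg hgg Ltw Ltg
      hLtw hLtg hm ((W, g) + s • Δ).1 ((W, g) + s • Δ).2 Δ
    rw [Prod.mk.eta] at hb
    rw [← hMeq]
    exact hb
  have htay := taylor_like hφ hφ' hbound
  -- compute φ 0 and φ' 0
  have h0pt : (W, g) + (0:ℝ) • Δ = (W, g) := by rw [zero_smul, add_zero]
  have hφ0 : Fful f ((W, g) + (0:ℝ) • Δ) = f W g := by rw [h0pt]; rfl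
  have hd0 : fderiv ℝ (Fful f) ((W, g) + (0:ℝ) • Δ) Δ = -M := by
    rw [h0pt, fderiv_decomp f hfd, hM]
    have e1 : ∀ i : Fin m, ⟪gradW f W g i, Δ.1 i⟫ = -(1 / Ltw i * ‖gradW f W g i‖ ^ 2) := by
      intro i
      rw [hΔ1 i, inner_neg_right, real_inner_smul_right, real_inner_self_eq_norm_sq]
    have e2 : ⟪gradG f W g, Δ.2⟫ = -(1 / Ltg * ‖gradG f W g‖ ^ 2) := by
      rw [hΔ2, inner_neg_right, real_inner_smul_right, real_inner_self_eq_norm_sq]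
    rw [Finset.sum_congr rfl fun i _ => e1 i, e2]
    rw [Finset.sum_neg_distrib]
    ring
  have h1pt : (W, g) + (1:ℝ) • Δ = (W', g') := by
    rw [one_smul]
    refine Prod.ext ?_ ?_
    · ext j : 1
      show W j + Δ.1 j = W' j
      rw [hΔ1 j, hW' j, sub_eq_add_neg]
    · show g + Δ.2 = g'
      rw [hΔ2, hg', sub_eq_add_neg]
  have hφ1 : Fful f ((W, g) + (1:ℝ) • Δ) = f W' g' := by rw [h1pt]; rfl
  rw [hφ1, hφ0, hd0] at htay
  -- htay : f W' g' ≤ f W g + -M + M/2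
  intro i
  have hMi : (1 / (2 * Ltw i)) * ‖gradW f W g i‖ ^ 2 ≤ M / 2 := by
    have hle : (1 / Ltw i) * ‖gradW f W g i‖ ^ 2 ≤ ∑ j, (1 / Ltw j) * ‖gradW f W g j‖ ^ 2 :=
      Finset.single_le_sum (f := fun j => (1 / Ltw j) * ‖gradW f W g j‖ ^ 2)
        (fun j _ => mul_nonneg (by have := hLtwpos j; positivity) (sq_nonneg _))
        (Finset.mem_univ i)
    have h2 : 0 ≤ (1 / Ltg) * ‖gradG f W g‖ ^ 2 :=
      mul_nonneg (by have := hLtgpos; positivity) (sq_nonneg _)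
    rw [hM]
    rw [show (1 / (2 * Ltw i)) * ‖gradW f W g i‖ ^ 2
        = ((1 / Ltw i) * ‖gradW f W g i‖ ^ 2) / 2 by ring]
    linarith
  linarith


/-- Weight-norm bound for GD: per-block,
`‖w_t⁽ⁱ⁾‖² ≤ ‖w₀⁽ⁱ⁾‖² + 2 (f(W₀,g₀) − f*) / L̃_{w⁽ⁱ⁾}` for all `t`. -/
theorem stmt17 {m p : ℕ} {d : Fin m → ℕ} (f : Wsp m d → Gsp p → ℝ)
    (hf : ContDiff ℝ 2 fun q : Wsp m d × Gsp p => f q.1 q.2)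
    (hPSI : PSI f)
    (fstar : ℝ)
    (hbdd : BddBelow (Set.range fun q : Wsp m d × Gsp p => f q.1 q.2))
    (hfstar : fstar = ⨅ q : Wsp m d × Gsp p, f q.1 q.2)
    (Lww : Fin m → Fin m → ℝ) (Lwg : Fin m → ℝ) (Lgg : ℝ)
    (hLwwpos : ∀ i j, 0 < Lww i j) (hLwgpos : ∀ i, 0 < Lwg i) (hLggpos : 0 < Lgg)
    (hww : ∀ W g i j, ‖hessWW f W g i j‖ ≤ Lww i j)
    (hwg : ∀ W g i, ‖hessWG f W g i‖ ≤ Lwg i)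
    (hgg : ∀ W g, ‖hessGG f W g‖ ≤ Lgg)
    (Ltw : Fin m → ℝ) (Ltg : ℝ)
    (hLtw : ∀ i, Ltw i = Lwg i + ∑ j, Lww i j)
    (hLtg : Ltg = m * Lgg + ∑ i, Lwg i)
    (W : ℕ → Wsp m d) (g : ℕ → Gsp p)
    (hW0nz : ∀ i, W 0 i ≠ 0)
    (hWupd : ∀ t i, W (t + 1) i = W t i - (1 / Ltw i) • gradW f (W t) (g t) i)
    (hgupd : ∀ t, g (t + 1) = g t - (1 / Ltg) • gradG f (W t) (g t)) :
    ∀ (t : ℕ) (i : Fin m),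
      ‖W t i‖ ^ 2 ≤ ‖W 0 i‖ ^ 2 + 2 * (f (W 0) (g 0) - fstar) / Ltw i := by
  intro t i
  have hm : 0 < m := i.pos
  have hf2 : ContDiff ℝ 2 (Fful f) := hf
  have hfd : Differentiable ℝ (Fful f) := hf2.differentiable (by norm_num)
  have hLtwpos : ∀ i, 0 < Ltw i := fun i => by
    rw [hLtw i]
    exact add_pos_of_pos_of_nonneg (hLwgpos i)
      (Finset.sum_nonneg fun j _ => (hLwwpos i j).le)
  have hstep : ∀ t j, f (W (t+1)) (g (t+1))
      + (1/(2*Ltw j)) * ‖gradW f (W t) (g t) j‖^2 ≤ f (W t) (g t) := fun t =>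
    descent_step f hf2 Lww Lwg Lgg hLwwpos hLwgpos hLggpos hww hwg hgg Ltw Ltg hLtw hLtg hm
      (W t) (W (t+1)) (g t) (g (t+1)) (hWupd t) (hgupd t)
  have hnorm : ∀ t, ‖W (t+1) i‖^2
      = ‖W t i‖^2 + (1/Ltw i)^2 * ‖gradW f (W t) (g t) i‖^2 := by
    intro t
    rw [hWupd t i, norm_sub_sq_real]
    have ho : ⟪W t i, (1/Ltw i) • gradW f (W t) (g t) i⟫ = (0:ℝ) := by
      rw [real_inner_smul_right, real_inner_comm, orth f hfd hPSI]
      ring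
    rw [ho, norm_smul, Real.norm_eq_abs,
      abs_of_pos (by have := hLtwpos i; positivity : (0:ℝ) < 1/Ltw i)]
    ring
  have key : ∀ t, f (W t) (g t)
      + (1/(2*Ltw i)) * (∑ s ∈ Finset.range t, ‖gradW f (W s) (g s) i‖^2)
      ≤ f (W 0) (g 0) := by
    intro t
    induction t with
    | zero => simp
    | succ n ih =>
      rw [Finset.sum_range_succ, mul_add]
      linarith [hstep n i]
  have keyn : ∀ t, ‖W t i‖^2
      = ‖W 0 i‖^2 + (1/Ltw i)^2 * ∑ s ∈ Finset.range t, ‖gradW f (W s) (g s) i‖^2 := by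
    intro t
    induction t with
    | zero => simp
    | succ n ih =>
      rw [Finset.sum_range_succ, hnorm n, ih]
      ring
  have hfstarle : fstar ≤ f (W t) (g t) := by
    rw [hfstar]
    exact ciInf_le hbdd (W t, g t)
  have hSnn : (0:ℝ) ≤ ∑ s ∈ Finset.range t, ‖gradW f (W s) (g s) i‖^2 :=
    Finset.sum_nonneg fun s _ => sq_nonneg _
  have h1 : (1/(2*Ltw i)) * (∑ s ∈ Finset.range t, ‖gradW f (W s) (g s) i‖^2)
      ≤ f (W 0) (g 0) - fstar := by linarith [key t]
  rw [keyn t]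
  have hL := hLtwpos i
  have h2 : (1/Ltw i)^2 * (∑ s ∈ Finset.range t, ‖gradW f (W s) (g s) i‖^2)
      = (2/Ltw i) * ((1/(2*Ltw i)) * ∑ s ∈ Finset.range t, ‖gradW f (W s) (g s) i‖^2) := by
    field_simp
  have h3 : (2/Ltw i) * ((1/(2*Ltw i)) * ∑ s ∈ Finset.range t, ‖gradW f (W s) (g s) i‖^2)
      ≤ (2/Ltw i) * (f (W 0) (g 0) - fstar) :=
    mul_le_mul_of_nonneg_left h1 (by positivity)
  have h4 : (2/Ltw i) * (f (W 0) (g 0) - fstar) = 2 * (f (W 0) (g 0) - fstar) / Ltw i := by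
    ring
  linarith


end
end
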